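/- Let f : ℤ⁴ → ℂ and let α₁¹, α₁², α₁³, α₀⁴, α₀⁰ ∈ ℂ. Write a lattice point as l = (l₁,l₂,l₃,l₀) and let e₁, e₂, e₃ denote the unit shifts in the first three directions. Assume that for every l ∈ ℤ⁴ one has f(l+e_k) ≠ f(l−e_k) for k = 1,2,3, and that the two constraints hold: (i) (α₁¹+α₁²+α₁³−α₀⁴+α₀⁰−l₁−l₂−l₃+l₀)/2 = Σ_{k=1}^{3} (α₁ᵏ−l_k)·(f(l)−f(l−e_k))/(f(l+e_k)−f(l−e_k)), and (ii) (α₁¹+α₁²+α₁³−α₀⁴−α₀⁰−l₁−l₂−l₃−l₀)/2 · f(l) = Σ_{k=1}^{3} (α₁ᵏ−l_k)·(f(l)−f(l−e_k))/(f(l+e_k)−f(l−e_k)) · f(l+e_k). Then for every l ∈ ℤ⁴ the similarity equation holds: (α₀⁰+l₀)·f(l) = Σ_{k=1}^{3} (α₁ᵏ−l_k)·(f(l−e_k)−f(l))·(f(l)−f(l+e_k))/(f(l−e_k)−f(l+e_k)). -/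
import Mathlib


/-- Four-dimensional lattice version: the two linear constraints on the
f-variables `f l₁ l₂ l₃ l₀` derived from the discrete symmetry of the Garnier
system in two variables imply the quadratic similarity constraint. -/
theorem stmt_2 (f : ℤ → ℤ → ℤ → ℤ → ℂ) (α11 α12 α13 α04 α00 : ℂ)
    (hne : ∀ l1 l2 l3 l0 : ℤ,
      f (l1+1) l2 l3 l0 ≠ f (l1-1) l2 l3 l0 ∧
      f l1 (l2+1) l3 l0 ≠ f l1 (l2-1) l3 l0 ∧
      f l1 l2 (l3+1) l0 ≠ f l1 l2 (l3-1) l0)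
    (hc1 : ∀ l1 l2 l3 l0 : ℤ,
      (α11 + α12 + α13 - α04 + α00 - (l1 : ℂ) - (l2 : ℂ) - (l3 : ℂ) + (l0 : ℂ)) / 2
        = (α11 - (l1 : ℂ)) * (f l1 l2 l3 l0 - f (l1-1) l2 l3 l0)
            / (f (l1+1) l2 l3 l0 - f (l1-1) l2 l3 l0)
          + (α12 - (l2 : ℂ)) * (f l1 l2 l3 l0 - f l1 (l2-1) l3 l0)
            / (f l1 (l2+1) l3 l0 - f l1 (l2-1) l3 l0)
          + (α13 - (l3 : ℂ)) * (f l1 l2 l3 l0 - f l1 l2 (l3-1) l0)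
            / (f l1 l2 (l3+1) l0 - f l1 l2 (l3-1) l0))
    (hc2 : ∀ l1 l2 l3 l0 : ℤ,
      (α11 + α12 + α13 - α04 - α00 - (l1 : ℂ) - (l2 : ℂ) - (l3 : ℂ) - (l0 : ℂ)) / 2
          * f l1 l2 l3 l0
        = (α11 - (l1 : ℂ)) * (f l1 l2 l3 l0 - f (l1-1) l2 l3 l0)
            / (f (l1+1) l2 l3 l0 - f (l1-1) l2 l3 l0) * f (l1+1) l2 l3 l0
          + (α12 - (l2 : ℂ)) * (f l1 l2 l3 l0 - f l1 (l2-1) l3 l0)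
            / (f l1 (l2+1) l3 l0 - f l1 (l2-1) l3 l0) * f l1 (l2+1) l3 l0
          + (α13 - (l3 : ℂ)) * (f l1 l2 l3 l0 - f l1 l2 (l3-1) l0)
            / (f l1 l2 (l3+1) l0 - f l1 l2 (l3-1) l0) * f l1 l2 (l3+1) l0) :
    ∀ l1 l2 l3 l0 : ℤ,
      (α00 + (l0 : ℂ)) * f l1 l2 l3 l0
        = (α11 - (l1 : ℂ)) * (f (l1-1) l2 l3 l0 - f l1 l2 l3 l0)
            * (f l1 l2 l3 l0 - f (l1+1) l2 l3 l0)
            / (f (l1-1) l2 l3 l0 - f (l1+1) l2 l3 l0)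
          + (α12 - (l2 : ℂ)) * (f l1 (l2-1) l3 l0 - f l1 l2 l3 l0)
            * (f l1 l2 l3 l0 - f l1 (l2+1) l3 l0)
            / (f l1 (l2-1) l3 l0 - f l1 (l2+1) l3 l0)
          + (α13 - (l3 : ℂ)) * (f l1 l2 (l3-1) l0 - f l1 l2 l3 l0)
            * (f l1 l2 l3 l0 - f l1 l2 (l3+1) l0)
            / (f l1 l2 (l3-1) l0 - f l1 l2 (l3+1) l0) := by
  intro l1 l2 l3 l0
  have H1 := hc1 l1 l2 l3 l0
  have H2 := hc2 l1 l2 l3 l0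
  rw [show f (l1-1) l2 l3 l0 - f (l1+1) l2 l3 l0
        = -(f (l1+1) l2 l3 l0 - f (l1-1) l2 l3 l0) by ring,
      show f l1 (l2-1) l3 l0 - f l1 (l2+1) l3 l0
        = -(f l1 (l2+1) l3 l0 - f l1 (l2-1) l3 l0) by ring,
      show f l1 l2 (l3-1) l0 - f l1 l2 (l3+1) l0
        = -(f l1 l2 (l3+1) l0 - f l1 l2 (l3-1) l0) by ring,
      div_neg, div_neg, div_neg]
  linear_combination f l1 l2 l3 l0 * H1 - H2
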